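/- The Mycielskian M₂(G) of a graph G satisfies χ(M₂(G)) = χ(G) + 1. -/

import Mathlib

/-- The generalised Mycielskian `M_r(G)`: vertex set `V × {0,…,r−1} ∪ {z}`
(`none` plays the role of `z`), with edges `{(u,0),(v,0)}` and `{(u,i),(v,i+1)}`
whenever `{u,v} ∈ E(G)`, and edges `{(u,r−1),z}` for all `u`. -/
def genMycielski {V : Type} (G : SimpleGraph V) (r : ℕ) :
    SimpleGraph (Option (V × Fin r)) :=
  SimpleGraph.fromRel (fun a b =>
    match a, b with
    | some (u, i), some (v, j) =>
        G.Adj u v ∧ ((i : ℕ) = 0 ∧ (j : ℕ) = 0 ∨ (j : ℕ) = (i : ℕ) + 1)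
    | some (_, i), none => (i : ℕ) = r - 1
    | _, _ => False)

lemma myc_colorable_up {V : Type} (G : SimpleGraph V) {n : ℕ} (h : G.Colorable n) :
    (genMycielski G 2).Colorable (n + 1) := by
  obtain ⟨C⟩ := h
  refine ⟨SimpleGraph.Coloring.mk
    (fun a => match a with
      | none => Fin.last n
      | some (u, _) => (C u).castSucc) ?_⟩
  intro a b hab
  rw [genMycielski, SimpleGraph.fromRel_adj] at hab
  obtain ⟨hne, h1 | h1⟩ := hab
  · match a, b with
    | some (u, i), some (v, j) =>
      obtain ⟨hadj, -⟩ := h1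
      simp only [ne_eq, Fin.castSucc_inj]
      exact C.valid hadj
    | some (u, i), none =>
      exact (Fin.castSucc_lt_last _).ne
  · match a, b with
    | some (u, i), some (v, j) =>
      obtain ⟨hadj, -⟩ := h1
      simp only [ne_eq, Fin.castSucc_inj]
      exact (C.valid hadj).symm
    | none, some (u, i) =>
      exact (Fin.castSucc_lt_last _).ne'

lemma myc_colorable_down {V : Type} (G : SimpleGraph V) {n : ℕ}
    (h : (genMycielski G 2).Colorable (n + 1)) : G.Colorable n := by
  obtain ⟨C⟩ := h
  set a := C none with ha
  have adj00 : ∀ {u v : V}, G.Adj u v →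
      (genMycielski G 2).Adj (some (u, 0)) (some (v, 0)) := by
    intro u v huv
    rw [genMycielski, SimpleGraph.fromRel_adj]
    refine ⟨by simp [huv.ne], Or.inl ⟨huv, Or.inl ⟨rfl, rfl⟩⟩⟩
  have adj01 : ∀ {u v : V}, G.Adj u v →
      (genMycielski G 2).Adj (some (u, 0)) (some (v, 1)) := by
    intro u v huv
    rw [genMycielski, SimpleGraph.fromRel_adj]
    refine ⟨by simp, Or.inl ⟨huv, Or.inr rfl⟩⟩
  have adj1z : ∀ (u : V), (genMycielski G 2).Adj (some (u, 1)) none := by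
    intro u
    rw [genMycielski, SimpleGraph.fromRel_adj]
    exact ⟨by simp, Or.inl rfl⟩
  have h1ne : ∀ (u : V), C (some (u, 1)) ≠ a := fun u => C.valid (adj1z u)
  let c' : V → {x : Fin (n + 1) // x ≠ a} := fun u =>
    if h : C (some (u, 0)) = a then ⟨C (some (u, 1)), h1ne u⟩
    else ⟨C (some (u, 0)), h⟩
  have valid : ∀ {u v : V}, G.Adj u v → c' u ≠ c' v := by
    intro u v huv  hne
    have hval : (c' u).1 = (c' v).1 := congrArg Subtype.val hne
    simp only [c'] at hval
    by_cases hu : C (some (u, 0)) = a <;> by_cases hv : C (some (v, 0)) = a <;>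
      simp only [hu, hv, dif_pos, dif_neg, not_false_iff] at hval
    · exact C.valid (adj00 huv) (hu.trans hv.symm)
    · exact C.valid (adj01 huv.symm) hval.symm
    · exact C.valid (adj01 huv) hval
    · exact C.valid (adj00 huv) hval
  have key : G.Colorable (Fintype.card {x : Fin (n + 1) // x ≠ a}) :=
    (SimpleGraph.Coloring.mk c' valid).colorable
  have hcard : Fintype.card {x : Fin (n + 1) // x ≠ a} = n := by
    simp [Fintype.card_subtype_compl]
  rwa [hcard] at key

/-- The Mycielskian `M₂(G)` satisfies `χ(M₂(G)) = χ(G) + 1`. -/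
theorem chromaticNumber_mycielski {V : Type} (G : SimpleGraph V) :
    (genMycielski G 2).chromaticNumber = G.chromaticNumber + 1 := by
  refine le_antisymm ?_ ?_
  · rcases eq_or_ne G.chromaticNumber ⊤ with h | h
    · rw [h]; simp
    · have hcol := G.colorable_of_chromaticNumber_ne_top h
      have hle := (myc_colorable_up G hcol).chromaticNumber_le
      have : ((G.chromaticNumber.toNat + 1 : ℕ) : ℕ∞) = G.chromaticNumber + 1 := by
        push_cast
        rw [ENat.coe_toNat h]
      rwa [this] at hle
  · rw [SimpleGraph.chromaticNumber]
    refine le_iInf₂ fun m hm => ?_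
    cases m with
    | zero =>
      obtain ⟨C⟩ := hm
      exact (C none).elim0
    | succ k =>
      have hk := (myc_colorable_down G hm).chromaticNumber_le
      calc G.chromaticNumber + 1 ≤ (k : ℕ∞) + 1 := add_le_add_left hk 1
        _ = ((k + 1 : ℕ) : ℕ∞) := by push_cast; ring
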